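/- Let ρ be a D×D density matrix, and for 0 ≤ t ≤ 1 set ρ_t := t·ρ + ((1−t)/D)·1_D. For 0 ≤ λ < 1 define C_λ := ρ_λ − ρ − Re⟨ρ_λ, ρ_λ − ρ⟩·1_D. Then for all λ, μ with 0 ≤ λ < μ ≤ 1, Re Tr(ρ_μ · C_λ) = −(μ − λ)(1 − λ)·‖ρ − (1/D)·1_D‖². In particular, if ρ ≠ (1/D)·1_D then Re Tr(ρ_μ · C_λ) < 0 for all λ < μ ≤ 1, so if C_λ is an entanglement witness then all states ρ_μ with λ < μ ≤ 1 are detected as entangled. -/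

import Mathlib

open Matrix Complex
open scoped Matrix Kronecker ComplexOrder

noncomputable section

/-- A density matrix: Hermitian, positive semidefinite, trace 1. -/
def IsDensityMatrix {n : Type*} [Fintype n] [DecidableEq n] (ρ : Matrix n n ℂ) : Prop :=
  ρ.IsHermitian ∧ ρ.PosSemidef ∧ ρ.trace = 1

/-- A separable state on ℂ^d ⊗ ℂ^d : a finite convex combination of Kronecker
products of density matrices. -/
def IsSepState {d : ℕ} (ρ : Matrix (Fin d × Fin d) (Fin d × Fin d) ℂ) : Prop :=
  ∃ (K : ℕ) (p : Fin K → ℝ) (ρ₁ ρ₂ : Fin K → Matrix (Fin d) (Fin d) ℂ),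
    (∀ k, 0 ≤ p k) ∧ (∑ k, p k = 1) ∧
    (∀ k, IsDensityMatrix (ρ₁ k)) ∧ (∀ k, IsDensityMatrix (ρ₂ k)) ∧
    ρ = ∑ k, (p k : ℂ) • (ρ₁ k ⊗ₖ ρ₂ k)

/-- Hilbert–Schmidt inner product ⟨A,B⟩ = Tr(A†B). -/
def hsInner {n : Type*} [Fintype n] (A B : Matrix n n ℂ) : ℂ := (Aᴴ * B).trace

/-- Hilbert–Schmidt (Frobenius) norm ‖A‖ = √Tr(A†A). -/
def hsNorm {n : Type*} [Fintype n] (A : Matrix n n ℂ) : ℝ :=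
  Real.sqrt ((Aᴴ * A).trace.re)

/-- The Weyl operator U_{nm} on ℂ^d: (U_{nm})_{k,l} = exp(2πi k n / d) if l = (k+m) mod d. -/
def weyl (d : ℕ) (n m : Fin d) : Matrix (Fin d) (Fin d) ℂ :=
  Matrix.of fun k l =>
    if l = k + m then Complex.exp (2 * Real.pi * Complex.I * k.val * n.val / d) else 0

/-- The maximally entangled two-qutrit vector |φ⁺₃⟩. -/
def phiPlus3 : (Fin 3 × Fin 3) → ℂ :=
  fun p => if p.1 = p.2 then ((1 / Real.sqrt 3 : ℝ) : ℂ) else 0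

/-- The projector |φ⁺₃⟩⟨φ⁺₃|. -/
def projPhiPlus3 : Matrix (Fin 3 × Fin 3) (Fin 3 × Fin 3) ℂ :=
  vecMulVec phiPlus3 (star phiPlus3)

/-- The two-qutrit Bell projectors P_{nm}. -/
def bellP (n m : Fin 3) : Matrix (Fin 3 × Fin 3) (Fin 3 × Fin 3) ℂ :=
  (weyl 3 n m ⊗ₖ (1 : Matrix (Fin 3) (Fin 3) ℂ)) * projPhiPlus3 *
    (weyl 3 n m ⊗ₖ (1 : Matrix (Fin 3) (Fin 3) ℂ))ᴴ

/-- The three-parameter family of two-qutrit states ρ_{α,β,γ}. -/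
def rhoFam (α β γ : ℝ) : Matrix (Fin 3 × Fin 3) (Fin 3 × Fin 3) ℂ :=
  (((1 - α - β - γ) / 9 : ℝ) : ℂ) • (1 : Matrix (Fin 3 × Fin 3) (Fin 3 × Fin 3) ℂ) +
    (α : ℂ) • bellP 0 0 + ((β / 2 : ℝ) : ℂ) • (bellP 1 0 + bellP 2 0) +
    ((γ / 3 : ℝ) : ℂ) • (bellP 0 1 + bellP 1 1 + bellP 2 1)

/-- The operator U₁. -/
def opU1 : Matrix (Fin 3 × Fin 3) (Fin 3 × Fin 3) ℂ :=
  weyl 3 0 1 ⊗ₖ weyl 3 0 1 + weyl 3 0 2 ⊗ₖ weyl 3 0 2 + weyl 3 1 1 ⊗ₖ weyl 3 2 1 +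
    weyl 3 1 2 ⊗ₖ weyl 3 2 2 + weyl 3 2 1 ⊗ₖ weyl 3 1 1 + weyl 3 2 2 ⊗ₖ weyl 3 1 2

/-- The operator U₂ᴵ. -/
def opU2I : Matrix (Fin 3 × Fin 3) (Fin 3 × Fin 3) ℂ := weyl 3 1 0 ⊗ₖ weyl 3 2 0

/-- The operator U₂ᴵᴵ. -/
def opU2II : Matrix (Fin 3 × Fin 3) (Fin 3 × Fin 3) ℂ := weyl 3 2 0 ⊗ₖ weyl 3 1 0

/-- The operator U₂ = U₂ᴵ + U₂ᴵᴵ. -/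
def opU2 : Matrix (Fin 3 × Fin 3) (Fin 3 × Fin 3) ℂ := opU2I + opU2II

/-- σ₊ = (1/3)(|01⟩⟨01| + |12⟩⟨12| + |20⟩⟨20|). -/
def sigmaPlus : Matrix (Fin 3 × Fin 3) (Fin 3 × Fin 3) ℂ :=
  (1 / 3 : ℂ) • Matrix.diagonal (fun p => if p.2 = p.1 + 1 then 1 else 0)

/-- σ₋ = (1/3)(|10⟩⟨10| + |21⟩⟨21| + |02⟩⟨02|). -/
def sigmaMinus : Matrix (Fin 3 × Fin 3) (Fin 3 × Fin 3) ℂ :=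
  (1 / 3 : ℂ) • Matrix.diagonal (fun p => if p.1 = p.2 + 1 then 1 else 0)

/-- The Horodecki states ρ_b. -/
def horodecki (b : ℝ) : Matrix (Fin 3 × Fin 3) (Fin 3 × Fin 3) ℂ :=
  (2 / 7 : ℂ) • projPhiPlus3 + ((b / 7 : ℝ) : ℂ) • sigmaPlus +
    (((5 - b) / 7 : ℝ) : ℂ) • sigmaMinus

/-- Partial transpose in the second subsystem. -/
def ptB (ρ : Matrix (Fin 3 × Fin 3) (Fin 3 × Fin 3) ℂ) :
    Matrix (Fin 3 × Fin 3) (Fin 3 × Fin 3) ℂ :=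
  Matrix.of fun p q => ρ (p.1, q.2) (q.1, p.2)

/-- Along the line from ρ to the maximally mixed state, the geometric operator C_λ has
strictly negative expectation value on all states ρ_μ with μ > λ. -/
theorem stmt15 (D : ℕ) (hD : 0 < D) (ρ : Matrix (Fin D) (Fin D) ℂ)
    (hρ : IsDensityMatrix ρ)
    (rhoLine : ℝ → Matrix (Fin D) (Fin D) ℂ)
    (hline : ∀ t : ℝ, rhoLine t = (t : ℂ) • ρ + (((1 - t) / D : ℝ) : ℂ) • 1)
    (Cop : ℝ → Matrix (Fin D) (Fin D) ℂ)
    (hC : ∀ l : ℝ, Cop l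
      = rhoLine l - ρ - (((hsInner (rhoLine l) (rhoLine l - ρ)).re : ℝ) : ℂ) • 1) :
    (∀ l μ : ℝ, 0 ≤ l → l < μ → μ ≤ 1 →
      ((rhoLine μ * Cop l).trace).re
        = -((μ - l) * (1 - l)) * (hsNorm (ρ - ((1 / D : ℝ) : ℂ) • 1)) ^ 2) ∧
    (ρ ≠ ((1 / D : ℝ) : ℂ) • 1 → ∀ l μ : ℝ, 0 ≤ l → l < μ → μ ≤ 1 →
      ((rhoLine μ * Cop l).trace).re < 0) := by
  have hD' : (D : ℂ) ≠ 0 := Nat.cast_ne_zero.2 hD.ne'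
  set Δ : Matrix (Fin D) (Fin D) ℂ := ρ - ((1 / D : ℝ) : ℂ) • 1 with hΔdef
  have key : ∀ t : ℝ, rhoLine t = ((1 / D : ℝ) : ℂ) • 1 + (t : ℂ) • Δ := by
    intro t
    rw [hline, hΔdef, smul_sub]
    have : (((1 - t) / D : ℝ) : ℂ) = ((1 / D : ℝ) : ℂ) - (t : ℂ) * ((1 / D : ℝ) : ℂ) := by
      push_cast; ring
    rw [this, sub_smul, smul_smul]
    abel
  have trΔ : Δ.trace = 0 := by
    simp [hΔdef, trace_sub, trace_smul, trace_one, hρ.2.2]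
    field_simp
    simp
  have hH : Δᴴ = Δ := by
    rw [hΔdef, conjTranspose_sub, hρ.1.eq, conjTranspose_smul, conjTranspose_one]
    congr 1
    simp [Complex.conj_ofReal]
  set T : ℂ := (Δ * Δ).trace with hT
  have prod : ∀ a b c d : ℂ,
      (((a • 1 + b • Δ) * (c • Δ + d • 1)).trace) = b * c * T + a * d * D := by
    intro a b c d
    simp [Matrix.add_mul, Matrix.mul_add, Matrix.smul_mul, Matrix.mul_smul, trace_add,
      trace_smul, trΔ, trace_one, smul_smul, hT]
    ring
  have hTre : T.re = ∑ j, ∑ i, Complex.normSq (Δ i j) := by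
    have h2 : Δᴴ * Δ = Δ * Δ := by rw [hH]
    rw [hT, ← h2]
    simp [Matrix.trace, Matrix.diag, Matrix.mul_apply, Matrix.conjTranspose_apply,
      ← Complex.normSq_eq_conj_mul_self]
  have hTnn : 0 ≤ T.re := by
    rw [hTre]
    exact Finset.sum_nonneg fun _ _ => Finset.sum_nonneg fun _ _ => Complex.normSq_nonneg _
  have hnorm : (hsNorm Δ) ^ 2 = T.re := by
    rw [hsNorm, hH, ← hT, Real.sq_sqrt hTnn]
  have hCop : ∀ l : ℝ, Cop l = ((l : ℂ) - 1) • Δ + (-(((l - 1) * l * T.re : ℝ) : ℂ)) • 1 := by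
    intro l
    have hsub : rhoLine l - ρ = ((l : ℂ) - 1) • Δ := by
      rw [key]
      have : ρ = ((1 / D : ℝ) : ℂ) • 1 + Δ := by rw [hΔdef]; abel
      rw [this, sub_smul, one_smul]
      abel
    have hconj : (rhoLine l)ᴴ = ((1 / D : ℝ) : ℂ) • 1 + (l : ℂ) • Δ := by
      rw [key, conjTranspose_add, conjTranspose_smul, conjTranspose_smul, conjTranspose_one, hH]
      simp [Complex.conj_ofReal]
    have hin : hsInner (rhoLine l) (rhoLine l - ρ) = (((l - 1) * l : ℝ) : ℂ) * T := by
      rw [hsInner, hsub, hconj]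
      have := prod ((1 / D : ℝ) : ℂ) (l : ℂ) ((l : ℂ) - 1) 0
      simp only [zero_smul, add_zero] at this
      rw [this]
      push_cast; ring
    have hre : (hsInner (rhoLine l) (rhoLine l - ρ)).re = (l - 1) * l * T.re := by
      rw [hin]
      simp [Complex.mul_re]
    rw [hC l, hre, hsub, sub_eq_add_neg, neg_smul]
  have main : ∀ l μ : ℝ, 0 ≤ l → l < μ → μ ≤ 1 →
      ((rhoLine μ * Cop l).trace).re = -((μ - l) * (1 - l)) * (hsNorm Δ) ^ 2 := by
    intro l μ _ _ _
    rw [key, hCop]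
    have := prod ((1 / D : ℝ) : ℂ) (μ : ℂ) ((l : ℂ) - 1) (-(((l - 1) * l * T.re : ℝ) : ℂ))
    rw [this]
    have hDone : ((1 / D : ℝ) : ℂ) * (-(((l - 1) * l * T.re : ℝ) : ℂ)) * D
        = -(((l - 1) * l * T.re : ℝ) : ℂ) := by
      push_cast
      field_simp
    rw [hDone]
    have : (μ : ℂ) * ((l : ℂ) - 1) * T = (((μ * (l - 1) : ℝ)) : ℂ) * T := by push_cast; ring
    rw [this]
    rw [hnorm]
    simp [Complex.mul_re]
    ring
  refine ⟨main, fun hne l μ h0 h1 h2 => ?_⟩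
  rw [main l μ h0 h1 h2]
  have hΔne : Δ ≠ 0 := by
    rw [hΔdef, sub_ne_zero]; exact hne
  have hTpos : 0 < T.re := by
    rw [hTre]
    obtain ⟨i, j, hij⟩ : ∃ i j, Δ i j ≠ 0 := by
      by_contra hcon; push_neg at hcon; exact hΔne (by ext i j; simp [hcon])
    have hp1 : 0 < ∑ i, Complex.normSq (Δ i j) :=
      lt_of_lt_of_le (Complex.normSq_pos.2 hij)
        (Finset.single_le_sum (f := fun i => Complex.normSq (Δ i j))
          (fun _ _ => Complex.normSq_nonneg _) (Finset.mem_univ i))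
    exact lt_of_lt_of_le hp1
      (Finset.single_le_sum (f := fun j => ∑ i, Complex.normSq (Δ i j))
        (fun _ _ => Finset.sum_nonneg fun _ _ => Complex.normSq_nonneg _) (Finset.mem_univ j))
  rw [hnorm]
  have hmul : 0 < (μ - l) * (1 - l) :=
    mul_pos (by linarith) (by linarith)
  nlinarith

end
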